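/- Let T : S(ℝ₊) → M(ℝ₊) be dilation-commuting (positively homogeneous with (Tf)(λt) = T(f(λ·))(t) for all λ, t > 0), let Φ₁, Φ₂ be nondecreasing surjections of ℝ₊, and fix γ ∈ ℝ, γ ≠ −1. Then the gauge inequality ρ_{Φ₁,t^γ}(Tf) ≤ C ρ_{Φ₂,t^γ}(f) (C independent of simple f) holds if and only if the modular inequality ∫_{ℝ₊} Φ₁(|Tf(t)|) t^γ dt ≤ K ∫_{ℝ₊} Φ₂(K|f(s)|) s^γ ds holds with K independent of simple f. -/

import Mathlib

open scoped ENNReal NNReal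
open MeasureTheory Set

/-- The power-weighted gauge `ρ_{Φ,t^γ}(f) = inf{λ>0 : ∫ Φ(|f|/λ)(t^γ/λ) dt ≤ 1}`, `inf ∅ = ∞`. -/
noncomputable def ggauge (Φ : ℝ → ℝ) (γ : ℝ) (f : ℝ → ℝ) : ℝ≥0∞ :=
  sInf ((fun l : ℝ => ENNReal.ofReal l) ''
    {l : ℝ | 0 < l ∧
      ∫⁻ s in Ioi (0:ℝ), ENNReal.ofReal (Φ (|f s| / l) * s ^ γ / l) ≤ 1})

/-- Simple measurable functions on `ℝ₊`. -/
def IsSimple (f : ℝ → ℝ) : Prop := Measurable f ∧ (Set.range f).Finite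

lemma IsSimple.cmul {f : ℝ → ℝ} (hf : IsSimple f) (c : ℝ) : IsSimple (fun s => c * f s) :=
  ⟨measurable_const.mul hf.1, ((hf.2.image (c * ·)).subset (by
    rintro _ ⟨s, rfl⟩; exact ⟨f s, ⟨s, rfl⟩, rfl⟩))⟩

lemma IsSimple.dil {f : ℝ → ℝ} (hf : IsSimple f) (r : ℝ) : IsSimple (fun s => f (r * s)) :=
  ⟨hf.1.comp (measurable_const_mul r), hf.2.subset (by rintro _ ⟨s, rfl⟩; exact ⟨r * s, rfl⟩)⟩

lemma lint_scale (G : ℝ → ℝ≥0∞) {r : ℝ} (hr : 0 < r) :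
    ∫⁻ s in Ioi (0:ℝ), G (r * s) = ENNReal.ofReal r⁻¹ * ∫⁻ s in Ioi (0:ℝ), G s := by
  let e : ℝ ≃ᵐ ℝ := (Homeomorph.mulLeft₀ r hr.ne').toMeasurableEquiv
  have he : ⇑e = fun x : ℝ => r * x := rfl
  have hpre : (fun x : ℝ => r * x) ⁻¹' (Ioi (0:ℝ)) = Ioi (0:ℝ) := by
    ext x
    simp only [mem_preimage, mem_Ioi]
    exact mul_pos_iff_of_pos_left hr
  have h1 : Measure.map (⇑e) (volume.restrict (Ioi (0:ℝ)))
      = ENNReal.ofReal r⁻¹ • (volume.restrict (Ioi (0:ℝ))) := by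
    rw [he, show volume.restrict (Ioi (0:ℝ))
        = volume.restrict ((fun x : ℝ => r * x) ⁻¹' (Ioi 0)) from by rw [hpre]]
    rw [← Measure.restrict_map (measurable_const_mul r) measurableSet_Ioi]
    rw [Real.map_volume_mul_left hr.ne', abs_of_pos (inv_pos.mpr hr),
      Measure.restrict_smul, hpre]
  calc ∫⁻ s in Ioi (0:ℝ), G (r * s)
      = ∫⁻ s, G (e s) ∂(volume.restrict (Ioi (0:ℝ))) := by rw [he]
    _ = ∫⁻ x, G x ∂(Measure.map (⇑e) (volume.restrict (Ioi (0:ℝ)))) :=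
        (lintegral_map_equiv G e).symm
    _ = ENNReal.ofReal r⁻¹ * ∫⁻ s in Ioi (0:ℝ), G s := by rw [h1, lintegral_smul_measure, smul_eq_mul]

lemma lint_scale' (F : ℝ → ℝ) (γ : ℝ) {r : ℝ} (hr : 0 < r) :
    ∫⁻ s in Ioi (0:ℝ), ENNReal.ofReal (F (r * s) * s ^ γ)
      = ENNReal.ofReal (r ^ (-(γ+1))) * ∫⁻ s in Ioi (0:ℝ), ENNReal.ofReal (F s * s ^ γ) := by
  have step1 : ∫⁻ s in Ioi (0:ℝ), ENNReal.ofReal (F (r * s) * s ^ γ)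
      = ∫⁻ s in Ioi (0:ℝ), ENNReal.ofReal (r ^ (-γ)) * ENNReal.ofReal (F (r * s) * (r * s) ^ γ) := by
    apply lintegral_congr_ae
    rw [Filter.EventuallyEq, ae_restrict_iff' measurableSet_Ioi]
    filter_upwards with s hs
    rw [← ENNReal.ofReal_mul (Real.rpow_nonneg hr.le _)]
    congr 1
    rw [Real.mul_rpow hr.le (le_of_lt hs)]
    rw [show r ^ (-γ) * (F (r*s) * (r ^ γ * s ^ γ)) = (r ^ (-γ) * r ^ γ) * (F (r*s) * s ^ γ) by ring]
    rw [← Real.rpow_add hr, neg_add_cancel, Real.rpow_zero, one_mul]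
  rw [step1, lintegral_const_mul' _ _ ENNReal.ofReal_ne_top,
    lint_scale (fun u => ENNReal.ofReal (F u * u ^ γ)) hr, ← mul_assoc,
    ← ENNReal.ofReal_mul (Real.rpow_nonneg hr.le _)]
  congr 2
  rw [← Real.rpow_neg_one r, ← Real.rpow_add hr]
  ring_nf

lemma div_int_iff (F : ℝ → ℝ) {l : ℝ} (hl : 0 < l) :
    (∫⁻ s in Ioi (0:ℝ), ENNReal.ofReal (F s / l) ≤ 1) ↔
      (∫⁻ s in Ioi (0:ℝ), ENNReal.ofReal (F s) ≤ ENNReal.ofReal l) := by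
  have h1 : ∀ s : ℝ, ENNReal.ofReal (F s / l) = ENNReal.ofReal (F s) * ENNReal.ofReal l⁻¹ := by
    intro s
    rw [div_eq_mul_inv, ENNReal.ofReal_mul' (inv_nonneg.mpr hl.le)]
  simp_rw [h1]
  rw [lintegral_mul_const' _ _ ENNReal.ofReal_ne_top,
    ENNReal.ofReal_inv_of_pos hl, ← div_eq_mul_inv,
    ENNReal.div_le_iff (by simpa using hl) ENNReal.ofReal_ne_top, one_mul]

lemma le_mul_sInf {c a : ℝ≥0∞} (hc0 : c ≠ 0) (hct : c ≠ ⊤) {S : Set ℝ≥0∞}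
    (h : ∀ x ∈ S, a ≤ c * x) : a ≤ c * sInf S := by
  have h1 : a / c ≤ sInf S :=
    le_sInf fun b hb => (ENNReal.div_le_iff hc0 hct).mpr ((h b hb).trans (le_of_eq (mul_comm c b)))
  have := (ENNReal.div_le_iff hc0 hct).mp h1
  rwa [mul_comm] at this

theorem stmt5 (γ : ℝ) (hγ : γ ≠ -1)
    (Φ₁ Φ₂ : ℝ → ℝ)
    (hΦ₁mono : MonotoneOn Φ₁ (Ioi 0)) (hΦ₁surj : SurjOn Φ₁ (Ioi 0) (Ioi 0))
    (hΦ₂mono : MonotoneOn Φ₂ (Ioi 0)) (hΦ₂surj : SurjOn Φ₂ (Ioi 0) (Ioi 0))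
    (T : (ℝ → ℝ) → (ℝ → ℝ))
    (hhom : ∀ (c : ℝ) (f : ℝ → ℝ) (x : ℝ), |T (fun y => c * f y) x| = |c| * |T f x|)
    (hdil : ∀ (f : ℝ → ℝ) (lam : ℝ), 0 < lam → ∀ x > (0:ℝ),
      T f (lam * x) = T (fun s => f (lam * s)) x) :
    (∃ C > 0, ∀ f, IsSimple f →
        ggauge Φ₁ γ (T f) ≤ ENNReal.ofReal C * ggauge Φ₂ γ f) ↔
    (∃ K > 0, ∀ f, IsSimple f →
        ∫⁻ s in Ioi (0:ℝ), ENNReal.ofReal (Φ₁ |T f s| * s ^ γ) ≤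
          ENNReal.ofReal K *
            ∫⁻ s in Ioi (0:ℝ), ENNReal.ofReal (Φ₂ (K * |f s|) * s ^ γ)) := by
  have hγ1 : γ + 1 ≠ 0 := fun h => hγ (by linarith)
  constructor
  · -- gauge ⇒ modular
    rintro ⟨C, hC, hG⟩
    set K := C + 1 with hKdef
    have hK0 : (0:ℝ) < K := by linarith
    refine ⟨K, hK0, ?_⟩
    intro f hf
    set A := ∫⁻ s in Ioi (0:ℝ), ENNReal.ofReal (Φ₂ (K * |f s|) * s ^ γ) with hAdef
    set M := ∫⁻ s in Ioi (0:ℝ), ENNReal.ofReal (Φ₁ |T f s| * s ^ γ) with hMdef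
    have step : ∀ ρ : ℝ, 0 < ρ → A ≤ ENNReal.ofReal ρ →
        M ≤ ENNReal.ofReal K * ENNReal.ofReal ρ := by
      intro ρ hρ hA
      set r := ρ ^ (γ+1)⁻¹ with hrdef
      have hr : 0 < r := Real.rpow_pos_of_pos hρ _
      have hrpow : r ^ (-(γ+1)) = ρ⁻¹ := by
        rw [hrdef, ← Real.rpow_mul hρ.le, show (γ+1)⁻¹ * -(γ+1) = -1 by
          field_simp, Real.rpow_neg_one]
      set g : ℝ → ℝ := fun s => K * f (r * s) with hgdef
      have hg : IsSimple g := (hf.dil r).cmul K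
      -- 1 is admissible for g w.r.t. Φ₂
      have hm : ∫⁻ s in Ioi (0:ℝ), ENNReal.ofReal (Φ₂ (|g s| / 1) * s ^ γ / 1) ≤ 1 := by
        have e1 : ∀ s : ℝ, Φ₂ (|g s| / 1) * s ^ γ / 1
            = (fun u => Φ₂ (K * |f u|)) (r * s) * s ^ γ := by
          intro s
          simp only [hgdef, div_one, abs_mul, abs_of_pos hK0]
        simp_rw [e1]
        rw [lint_scale' (fun u => Φ₂ (K * |f u|)) γ hr, hrpow]
        calc ENNReal.ofReal ρ⁻¹ * A ≤ ENNReal.ofReal ρ⁻¹ * ENNReal.ofReal ρ :=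
              by gcongr
          _ = ENNReal.ofReal (ρ⁻¹ * ρ) := (ENNReal.ofReal_mul (inv_nonneg.mpr hρ.le)).symm
          _ = 1 := by rw [inv_mul_cancel₀ hρ.ne', ENNReal.ofReal_one]
      have hgauge_g : ggauge Φ₂ γ g ≤ 1 := by
        have : (1:ℝ≥0∞) = ENNReal.ofReal 1 := ENNReal.ofReal_one.symm
        rw [this]
        exact sInf_le ⟨1, ⟨one_pos, hm⟩, rfl⟩
      have hlt : ggauge Φ₁ γ (T g) < ENNReal.ofReal K := by
        calc ggauge Φ₁ γ (T g) ≤ ENNReal.ofReal C * ggauge Φ₂ γ g := hG g hg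
          _ ≤ ENNReal.ofReal C * 1 := by gcongr
          _ = ENNReal.ofReal C := mul_one _
          _ < ENNReal.ofReal K := by
              rw [ENNReal.ofReal_lt_ofReal_iff hK0]; linarith
      obtain ⟨x, hx, hxlt⟩ := sInf_lt_iff.mp hlt
      obtain ⟨l, ⟨hl0, hlcond⟩, rfl⟩ := hx
      have hlK : l ≤ K := by
        by_contra h
        push_neg at h
        exact absurd (ENNReal.ofReal_le_ofReal h.le) (not_le.mpr hxlt)
      have h2 : ∫⁻ s in Ioi (0:ℝ), ENNReal.ofReal (Φ₁ (|T g s| / l) * s ^ γ)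
          ≤ ENNReal.ofReal l :=
        (div_int_iff (fun s => Φ₁ (|T g s| / l) * s ^ γ) hl0).mp hlcond
      have h3 : ∫⁻ s in Ioi (0:ℝ), ENNReal.ofReal (Φ₁ (|T g s| / K) * s ^ γ)
          ≤ ENNReal.ofReal l := by
        refine le_trans (setLIntegral_mono' measurableSet_Ioi ?_) h2
        intro s hs
        apply ENNReal.ofReal_le_ofReal
        apply mul_le_mul_of_nonneg_right _ (Real.rpow_nonneg (le_of_lt hs) γ)
        rcases eq_or_ne (T g s) 0 with h | h
        · simp [h]
        · have habs : 0 < |T g s| := abs_pos.mpr h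
          exact hΦ₁mono (mem_Ioi.mpr (div_pos habs hK0)) (mem_Ioi.mpr (div_pos habs hl0))
            (div_le_div_of_nonneg_left habs.le hl0 hlK)
      have h4 : ∫⁻ s in Ioi (0:ℝ), ENNReal.ofReal ((fun u => Φ₁ |T f u|) (r * s) * s ^ γ)
          ≤ ENNReal.ofReal l := by
        refine le_trans (le_of_eq (lintegral_congr_ae ?_)) h3
        rw [Filter.EventuallyEq, ae_restrict_iff' measurableSet_Ioi]
        filter_upwards with s hs
        congr 2
        have hTg : |T g s| = K * |T f (r * s)| := by
          have e2 : T g s = T (fun y => K * (fun u => f (r * u)) y) s := rfl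
          rw [e2, hhom K _ s, abs_of_pos hK0, ← hdil f r hr s hs]
        rw [hTg, mul_div_cancel_left₀ _ hK0.ne']
      rw [lint_scale' (fun u => Φ₁ |T f u|) γ hr, hrpow, ← hMdef] at h4
      have h5 : ENNReal.ofReal ρ * (ENNReal.ofReal ρ⁻¹ * M) ≤ ENNReal.ofReal ρ * ENNReal.ofReal l :=
        by gcongr
      have h6 : ENNReal.ofReal ρ * (ENNReal.ofReal ρ⁻¹ * M) = M := by
        rw [← mul_assoc, ← ENNReal.ofReal_mul hρ.le, mul_inv_cancel₀ hρ.ne',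
          ENNReal.ofReal_one, one_mul]
      rw [h6] at h5
      calc M ≤ ENNReal.ofReal ρ * ENNReal.ofReal l := h5
        _ ≤ ENNReal.ofReal ρ * ENNReal.ofReal K :=
            by gcongr
        _ = ENNReal.ofReal K * ENNReal.ofReal ρ := mul_comm _ _
    rcases eq_top_or_lt_top A with hAt | hAt
    · rw [hAt, ENNReal.mul_top (by simpa [ENNReal.ofReal_eq_zero] using hK0 : ENNReal.ofReal K ≠ 0)]
      exact le_top
    · apply ENNReal.le_of_forall_pos_le_add
      intro ε hε _
      have hεK : (0:ℝ) < ε / K := div_pos hε hK0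
      have hρ : (0:ℝ) < A.toReal + ε / K := by positivity
      have hAle : A ≤ ENNReal.ofReal (A.toReal + ε / K) := by
        rw [ENNReal.ofReal_add ENNReal.toReal_nonneg hεK.le, ENNReal.ofReal_toReal hAt.ne]
        exact le_self_add
      have := step _ hρ hAle
      calc M ≤ ENNReal.ofReal K * ENNReal.ofReal (A.toReal + ε / K) := this
        _ = ENNReal.ofReal K * A + ENNReal.ofReal (K * (ε / K)) := by
            rw [ENNReal.ofReal_add ENNReal.toReal_nonneg hεK.le, mul_add,
              ENNReal.ofReal_toReal hAt.ne, ← ENNReal.ofReal_mul hK0.le]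
        _ = ENNReal.ofReal K * A + ↑ε := by
            rw [mul_div_cancel₀ _ hK0.ne', ENNReal.ofReal_coe_nnreal]
  · -- modular ⇒ gauge
    rintro ⟨K, hK, hM⟩
    refine ⟨K, hK, ?_⟩
    intro f hf
    unfold ggauge
    apply le_mul_sInf (by simpa [ENNReal.ofReal_eq_zero] using hK) ENNReal.ofReal_ne_top
    rintro x ⟨l, ⟨hl0, hcond⟩, rfl⟩
    have hKl : (0:ℝ) < K * l := mul_pos hK hl0
    set g : ℝ → ℝ := fun s => (K * l)⁻¹ * f s with hgdef
    have hg : IsSimple g := hf.cmul _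
    have habs : ∀ s, |T g s| = |T f s| / (K * l) := by
      intro s
      rw [hgdef]
      rw [hhom ((K*l)⁻¹) f s, abs_of_pos (inv_pos.mpr hKl), div_eq_mul_inv, mul_comm]
    have hR : ∫⁻ s in Ioi (0:ℝ), ENNReal.ofReal (Φ₂ (K * |g s|) * s ^ γ)
        ≤ ENNReal.ofReal l := by
      have e : ∀ s : ℝ, K * |g s| = |f s| / l := by
        intro s
        rw [hgdef]
        simp only []
        rw [abs_mul, abs_of_pos (inv_pos.mpr hKl)]
        field_simp
      simp_rw [e]
      exact (div_int_iff (fun s => Φ₂ (|f s| / l) * s ^ γ) hl0).mp hcond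
    have hL : ∫⁻ s in Ioi (0:ℝ), ENNReal.ofReal (Φ₁ (|T f s| / (K * l)) * s ^ γ)
        ≤ ENNReal.ofReal (K * l) := by
      have := hM g hg
      simp_rw [habs] at this
      calc ∫⁻ s in Ioi (0:ℝ), ENNReal.ofReal (Φ₁ (|T f s| / (K * l)) * s ^ γ)
          ≤ ENNReal.ofReal K * ∫⁻ s in Ioi (0:ℝ), ENNReal.ofReal (Φ₂ (K * |g s|) * s ^ γ) := this
        _ ≤ ENNReal.ofReal K * ENNReal.ofReal l := by gcongr
        _ = ENNReal.ofReal (K * l) := (ENNReal.ofReal_mul hK.le).symm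
    have hmem : ∫⁻ s in Ioi (0:ℝ),
        ENNReal.ofReal (Φ₁ (|T f s| / (K * l)) * s ^ γ / (K * l)) ≤ 1 :=
      (div_int_iff (fun s => Φ₁ (|T f s| / (K * l)) * s ^ γ) hKl).mpr hL
    calc ggauge Φ₁ γ (T f) ≤ ENNReal.ofReal (K * l) := sInf_le ⟨K * l, ⟨hKl, hmem⟩, rfl⟩
      _ = ENNReal.ofReal K * ENNReal.ofReal l := ENNReal.ofReal_mul hK.le
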